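/- Let p be an odd prime and let m ≤ l be natural numbers with m odd. Let δ ∈ 𝔽_p be a non-square unit and E_m = diag(1, …, 1, δ). Then the congruence orbit S₁ = {u : ∃ γ ∈ GL_l(𝔽_p), γᵀ · diag(1_m, 0_{l−m}) · γ = u} and the congruence orbit S₂ = {u : ∃ γ ∈ GL_l(𝔽_p), γᵀ · diag(E_m, 0_{l−m}) · γ = u} have the same cardinality: #S₁ = #S₂. (Equivalently, the character sum W^l_m(χ_p) vanishes for m odd.) -/

import Mathlib

set_option maxHeartbeats 1000000

open Matrix

theorem stmt_8 (p : ℕ) (hp : p.Prime) (hp2 : p ≠ 2) (l m : ℕ) (hml : m ≤ l)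
    (hodd : Odd m)
    (δ : ZMod p) (hδunit : IsUnit δ) (hδ : ¬∃ x : ZMod p, x ^ 2 = δ) :
    Nat.card {u : Matrix (Fin m ⊕ Fin (l - m)) (Fin m ⊕ Fin (l - m)) (ZMod p) //
        ∃ γ : GL (Fin m ⊕ Fin (l - m)) (ZMod p),
          (γ : Matrix (Fin m ⊕ Fin (l - m)) (Fin m ⊕ Fin (l - m)) (ZMod p))ᵀ *
            Matrix.fromBlocks 1 0 0 0 *
            (γ : Matrix (Fin m ⊕ Fin (l - m)) (Fin m ⊕ Fin (l - m)) (ZMod p)) = u} =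
      Nat.card {u : Matrix (Fin m ⊕ Fin (l - m)) (Fin m ⊕ Fin (l - m)) (ZMod p) //
        ∃ γ : GL (Fin m ⊕ Fin (l - m)) (ZMod p),
          (γ : Matrix (Fin m ⊕ Fin (l - m)) (Fin m ⊕ Fin (l - m)) (ZMod p))ᵀ *
            Matrix.fromBlocks
              (Matrix.diagonal (fun i : Fin m => if (i : ℕ) = m - 1 then δ else 1)) 0 0 0 *
            (γ : Matrix (Fin m ⊕ Fin (l - m)) (Fin m ⊕ Fin (l - m)) (ZMod p)) = u} := by
  classical
  haveI : Fact p.Prime := ⟨hp⟩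
  obtain ⟨k, hk⟩ := hodd
  -- inverse of δ
  set ε : ZMod p := ↑hδunit.unit⁻¹ with hε
  have hδε : δ * ε = 1 := hδunit.mul_val_inv
  have hεδ : ε * δ = 1 := by rw [mul_comm]; exact hδε
  -- ε as sum of two squares
  obtain ⟨a, b, hab⟩ := ZMod.sq_add_sq p ε
  -- the rotation matrix
  set R : Matrix (Fin 2) (Fin 2) (ZMod p) := !![a, -b; b, a] with hR
  have hRR : Rᵀ * R = ε • (1 : Matrix (Fin 2) (Fin 2) (ZMod p)) := by
    have hRT : Rᵀ = !![a, b; -b, a] := by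
      rw [hR]; ext i j; fin_cases i <;> fin_cases j <;> rfl
    rw [hRT, hR, Matrix.mul_fin_two]
    ext i j
    fin_cases i <;> fin_cases j <;>
      simp [Matrix.one_apply] <;>
      first
        | linear_combination hab
        | ring
  -- block-diagonal matrix of rotations
  set B0 : Matrix (Fin 2 × Fin k) (Fin 2 × Fin k) (ZMod p) :=
    Matrix.blockDiagonal (fun _ : Fin k => R) with hB0
  have hB0B0 : B0ᵀ * B0 = ε • (1 : Matrix (Fin 2 × Fin k) (Fin 2 × Fin k) (ZMod p)) := by
    rw [hB0, Matrix.blockDiagonal_transpose, ← Matrix.blockDiagonal_mul]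
    simp only [hRR]
    calc Matrix.blockDiagonal (fun _ : Fin k => ε • (1 : Matrix (Fin 2) (Fin 2) (ZMod p)))
        = Matrix.blockDiagonal (ε • (1 : Fin k → Matrix (Fin 2) (Fin 2) (ZMod p))) := rfl
      _ = ε • Matrix.blockDiagonal (1 : Fin k → Matrix (Fin 2) (Fin 2) (ZMod p)) :=
          Matrix.blockDiagonal_smul ε 1
      _ = ε • 1 := by rw [Matrix.blockDiagonal_one]
  -- full block matrix on (Fin 2 × Fin k) ⊕ Unit
  set B : Matrix ((Fin 2 × Fin k) ⊕ Unit) ((Fin 2 × Fin k) ⊕ Unit) (ZMod p) :=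
    Matrix.fromBlocks B0 0 0 1 with hB
  have hBB : Bᵀ * B =
      Matrix.diagonal (Sum.elim (fun _ : Fin 2 × Fin k => ε) (fun _ : Unit => (1 : ZMod p))) := by
    rw [hB, Matrix.fromBlocks_transpose, Matrix.fromBlocks_multiply]
    simp only [hB0B0, Matrix.transpose_zero, Matrix.transpose_one, Matrix.mul_zero,
      Matrix.zero_mul, Matrix.mul_one, Matrix.one_mul, add_zero, zero_add]
    rw [← Matrix.fromBlocks_diagonal]
    have h1 : ε • (1 : Matrix (Fin 2 × Fin k) (Fin 2 × Fin k) (ZMod p))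
        = Matrix.diagonal (fun _ => ε) := by
      ext i j
      rcases eq_or_ne i j with rfl | hij
      · simp
      · simp [Matrix.one_apply_ne hij, Matrix.diagonal_apply_ne _ hij]
    have h2 : (1 : Matrix Unit Unit (ZMod p)) = Matrix.diagonal (fun _ => 1) :=
      Matrix.diagonal_one.symm
    rw [h1, ← h2]
  -- the reindexing equivalence
  let e : (Fin 2 × Fin k) ⊕ Unit ≃ Fin m :=
    { toFun := Sum.elim
        (fun st => ⟨2 * (st.2 : ℕ) + (st.1 : ℕ), by
          have := st.1.isLt; have := st.2.isLt; omega⟩)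
        (fun _ => ⟨m - 1, by omega⟩)
      invFun := fun i =>
        if h : (i : ℕ) = m - 1 then Sum.inr ()
        else Sum.inl (⟨(i : ℕ) % 2, by omega⟩, ⟨(i : ℕ) / 2, by
          have := i.isLt; omega⟩)
      left_inv := by
        rintro (⟨s, t⟩ | u)
        · have hs := s.isLt; have ht := t.isLt
          simp only [Sum.elim_inl]
          split_ifs
          · next h =>
              exfalso
              rw [Fin.val_mk] at h
              omega
          · next h =>
              rw [Fin.val_mk] at h
              refine (dif_neg h).trans ?_; simp only [Sum.inl.injEq, Prod.mk.injEq]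
              exact ⟨Fin.ext (by rw [Fin.val_mk, Fin.val_mk]; omega),
                Fin.ext (by rw [Fin.val_mk, Fin.val_mk]; omega)⟩
        · simp only [Sum.elim_inr]
          exact dif_pos rfl
      right_inv := by
        intro i
        have hi := i.isLt
        dsimp only
        split
        · next h =>
            simp only [Sum.elim_inr]
            exact Fin.ext (by rw [Fin.val_mk]; omega)
        · next h =>
            simp only [Sum.elim_inl]
            refine Fin.ext ?_
            show 2 * ((i : ℕ) / 2) + (i : ℕ) % 2 = (i : ℕ)
            omega }
  have he_inr : e (Sum.inr ()) = ⟨m - 1, by omega⟩ := rfl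
  have hsymm : ∀ i : Fin m, e.symm i = Sum.inr () ↔ (i : ℕ) = m - 1 := by
    intro i
    rw [Equiv.symm_apply_eq, he_inr]
    constructor
    · rintro rfl; rfl
    · intro h; exact Fin.ext (by rw [Fin.val_mk, h])
  -- the diagonal values
  set v : Fin m → ZMod p := fun i => if (i : ℕ) = m - 1 then 1 else ε with hv
  set β : Matrix (Fin m) (Fin m) (ZMod p) := B.submatrix ⇑e.symm ⇑e.symm with hβ
  have hββ : βᵀ * β = Matrix.diagonal v := by
    rw [hβ, Matrix.transpose_submatrix]
    rw [Matrix.submatrix_mul_equiv Bᵀ B _ e.symm _]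
    rw [hBB, Matrix.submatrix_diagonal _ _ e.symm.injective]
    refine congrArg Matrix.diagonal (funext fun i => ?_)
    show Sum.elim (fun _ => ε) (fun _ => (1 : ZMod p)) (e.symm i) = v i
    by_cases h : (i : ℕ) = m - 1
    · rw [(hsymm i).2 h, Sum.elim_inr, hv]
      simp [h]
    · obtain ⟨st, hst⟩ : ∃ st, e.symm i = Sum.inl st := by
        cases hcase : e.symm i with
        | inl st => exact ⟨st, rfl⟩
        | inr u => exact absurd ((hsymm i).1 hcase) h
      rw [hst, Sum.elim_inl, hv]
      simp [h]
  -- β is invertible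
  set w : Fin m → ZMod p := fun i => if (i : ℕ) = m - 1 then 1 else δ with hw
  have hwv : Matrix.diagonal w * Matrix.diagonal v = 1 := by
    rw [Matrix.diagonal_mul_diagonal, ← Matrix.diagonal_one]
    refine congrArg Matrix.diagonal (funext fun i => ?_)
    simp only [hw, hv]
    split <;> simp [hδε]
  haveI hβinv : Invertible β :=
    invertibleOfLeftInverse β (Matrix.diagonal w * βᵀ)
      (by rw [Matrix.mul_assoc, hββ, hwv])
  -- the matrices in the statement
  set Amat : Matrix (Fin m ⊕ Fin (l - m)) (Fin m ⊕ Fin (l - m)) (ZMod p) :=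
    Matrix.fromBlocks 1 0 0 0 with hA
  set Emat : Matrix (Fin m ⊕ Fin (l - m)) (Fin m ⊕ Fin (l - m)) (ZMod p) :=
    Matrix.fromBlocks
      (Matrix.diagonal (fun i : Fin m => if (i : ℕ) = m - 1 then δ else 1)) 0 0 0 with hEdef
  -- the congruence element
  set Γmat : Matrix (Fin m ⊕ Fin (l - m)) (Fin m ⊕ Fin (l - m)) (ZMod p) :=
    Matrix.fromBlocks β 0 0 1 with hΓ
  set Γinv : Matrix (Fin m ⊕ Fin (l - m)) (Fin m ⊕ Fin (l - m)) (ZMod p) :=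
    Matrix.fromBlocks (⅟β) 0 0 1 with hΓi
  have hΓ1 : Γmat * Γinv = 1 := by
    rw [hΓ, hΓi, Matrix.fromBlocks_multiply]
    simp [Matrix.fromBlocks_one]
  have hΓ2 : Γinv * Γmat = 1 := by
    rw [hΓ, hΓi, Matrix.fromBlocks_multiply]
    simp [Matrix.fromBlocks_one]
  set Γ : GL (Fin m ⊕ Fin (l - m)) (ZMod p) := ⟨Γmat, Γinv, hΓ1, hΓ2⟩ with hΓu
  -- the key congruence identity
  have hKey : Γmatᵀ * (δ • Amat) * Γmat = Emat := by
    rw [hΓ, hA, hEdef, Matrix.fromBlocks_transpose]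
    have hsmul : δ • (Matrix.fromBlocks (1 : Matrix (Fin m) (Fin m) (ZMod p)) 0 0
        (0 : Matrix (Fin (l - m)) (Fin (l - m)) (ZMod p))) =
        Matrix.fromBlocks (δ • (1 : Matrix (Fin m) (Fin m) (ZMod p))) 0 0 0 := by
      rw [Matrix.fromBlocks_smul]
      simp only [smul_zero]
    rw [hsmul, Matrix.fromBlocks_multiply, Matrix.fromBlocks_multiply]
    simp only [Matrix.mul_zero, Matrix.zero_mul, Matrix.mul_one, Matrix.one_mul,
      Matrix.transpose_zero, Matrix.transpose_one, add_zero, zero_add]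
    have hblock : βᵀ * (δ • (1 : Matrix (Fin m) (Fin m) (ZMod p))) * β =
        Matrix.diagonal (fun i : Fin m => if (i : ℕ) = m - 1 then δ else 1) := by
      rw [mul_smul_comm, Matrix.mul_one, smul_mul_assoc, hββ, ← Matrix.diagonal_smul]
      refine congrArg Matrix.diagonal (funext fun i => ?_)
      simp only [hv, Pi.smul_apply, smul_eq_mul]
      split <;> simp [hδε]
    rw [hblock]
  have hΓval : (Γ : Matrix (Fin m ⊕ Fin (l - m)) (Fin m ⊕ Fin (l - m)) (ZMod p)) = Γmat := rfl
  have hΓival : (↑Γ⁻¹ : Matrix (Fin m ⊕ Fin (l - m)) (Fin m ⊕ Fin (l - m)) (ZMod p)) = Γinv := rfl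
  -- conjugated identity
  have hKey' : Γinvᵀ * Emat * Γinv = δ • Amat := by
    have h3 : Γinvᵀ * Γmatᵀ = 1 := by
      rw [← Matrix.transpose_mul, hΓ1, Matrix.transpose_one]
    calc Γinvᵀ * Emat * Γinv
        = Γinvᵀ * (Γmatᵀ * (δ • Amat) * Γmat) * Γinv := by rw [hKey]
      _ = (Γinvᵀ * Γmatᵀ) * ((δ • Amat) * (Γmat * Γinv)) := by
          simp only [Matrix.mul_assoc]
      _ = δ • Amat := by rw [h3, hΓ1, Matrix.one_mul, Matrix.mul_one]
  have hδ0 : δ ≠ 0 := hδunit.ne_zero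
  -- the key equivalence of orbit membership
  have key : ∀ u : Matrix (Fin m ⊕ Fin (l - m)) (Fin m ⊕ Fin (l - m)) (ZMod p),
      (∃ γ : GL (Fin m ⊕ Fin (l - m)) (ZMod p),
        (γ : Matrix (Fin m ⊕ Fin (l - m)) (Fin m ⊕ Fin (l - m)) (ZMod p))ᵀ * Amat *
          (γ : Matrix (Fin m ⊕ Fin (l - m)) (Fin m ⊕ Fin (l - m)) (ZMod p)) = u) ↔
      (∃ γ : GL (Fin m ⊕ Fin (l - m)) (ZMod p),
        (γ : Matrix (Fin m ⊕ Fin (l - m)) (Fin m ⊕ Fin (l - m)) (ZMod p))ᵀ * Emat *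
          (γ : Matrix (Fin m ⊕ Fin (l - m)) (Fin m ⊕ Fin (l - m)) (ZMod p)) = δ • u) := by
    intro u
    constructor
    · rintro ⟨γ, rfl⟩
      refine ⟨Γ⁻¹ * γ, ?_⟩
      show ((Γ⁻¹ * γ).val)ᵀ * Emat * (Γ⁻¹ * γ).val = δ • (γ.valᵀ * Amat * γ.val)
      rw [Units.val_mul, Matrix.transpose_mul]
      have : (Γ⁻¹).val = Γinv := hΓival
      rw [this]
      calc γ.valᵀ * Γinvᵀ * Emat * (Γinv * γ.val)
          = γ.valᵀ * ((Γinvᵀ * Emat * Γinv) * γ.val) := by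
            simp only [Matrix.mul_assoc]
        _ = γ.valᵀ * ((δ • Amat) * γ.val) := by rw [hKey']
        _ = δ • (γ.valᵀ * Amat * γ.val) := by
            rw [Matrix.smul_mul, Matrix.mul_smul, Matrix.mul_assoc]
    · rintro ⟨γ, h⟩
      refine ⟨Γ * γ, ?_⟩
      show ((Γ * γ).val)ᵀ * Amat * (Γ * γ).val = u
      apply smul_right_injective
        (Matrix (Fin m ⊕ Fin (l - m)) (Fin m ⊕ Fin (l - m)) (ZMod p)) hδ0
      show δ • (((Γ * γ).val)ᵀ * Amat * (Γ * γ).val) = δ • u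
      rw [Units.val_mul, Matrix.transpose_mul, hΓval]
      calc δ • (γ.valᵀ * Γmatᵀ * Amat * (Γmat * γ.val))
          = γ.valᵀ * ((Γmatᵀ * (δ • Amat) * Γmat) * γ.val) := by
            simp only [Matrix.smul_mul, Matrix.mul_smul, Matrix.mul_assoc]
        _ = γ.valᵀ * (Emat * γ.val) := by rw [hKey]
        _ = γ.valᵀ * Emat * γ.val := by rw [Matrix.mul_assoc]
        _ = δ • u := h
  refine Nat.card_congr ?_
  exact
    { toFun := fun x => ⟨δ • x.1, (key x.1).1 x.2⟩
      invFun := fun y => ⟨ε • y.1, (key (ε • y.1)).2 (by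
        rw [smul_smul, hδε, one_smul]; exact y.2)⟩
      left_inv := fun x => Subtype.ext (by
        show ε • δ • x.1 = x.1
        rw [smul_smul, hεδ, one_smul])
      right_inv := fun y => Subtype.ext (by
        show δ • ε • y.1 = y.1
        rw [smul_smul, hδε, one_smul]) }
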